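/- Suppose G is a finite group. For every ν in the normalizer N of W in G, the number of (νχ,θ)-orbits equals the number of (χ,θ)-orbits: |S(νχ,θ)| = |S(χ,θ)|; in particular, taking θ to be the trivial character of H, the number of W-orbits a such that χ(σ) = 1 for all σ ∈ W stabilizing a point of a equals the corresponding number for νχ. -/

import Mathlib

/-- The conjugate character `νχ : W → ℂˣ`, `(νχ)(σ) = χ(ν⁻¹σν)`, of a
one-dimensional character `χ` of `W` by an element `ν` of the normalizer of `W`. -/
def conjChar {G : Type*} [Group G] {W : Subgroup G} (ν : G) (hν : ν ∈ Subgroup.normalizer (W : Set G))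
    (χ : W →* ℂˣ) : W →* ℂˣ where
  toFun σ := χ ⟨ν⁻¹ * (σ : G) * ν, by
    have h := (Subgroup.mem_normalizer_iff.mp (Subgroup.inv_mem _ hν) (σ : G)).mp σ.2
    simpa using h⟩
  map_one' := by
    rw [← χ.map_one]
    apply congrArg
    ext
    simp
  map_mul' σ τ := by
    show χ _ = χ _ * χ _
    rw [← χ.map_mul]
    apply congrArg
    ext
    push_cast
    group

/-- A `W`-orbit `a` in `G/H` is a `(χ,θ)`-orbit if for every `υ ∈ G` with
`υH ∈ a` and every `σ ∈ W` with `υ⁻¹συ ∈ H` one has `χ(σ)·θ(υ⁻¹συ) = 1`. -/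
def IsChiThetaOrbit {G : Type*} [Group G] {H W : Subgroup G}
    (χ : W →* ℂˣ) (θ : H →* ℂˣ)
    (a : Quotient (MulAction.orbitRel W (G ⧸ H))) : Prop :=
  ∀ υ : G, Quotient.mk (MulAction.orbitRel W (G ⧸ H)) (υ : G ⧸ H) = a →
    ∀ (σ : W) (hσ : υ⁻¹ * (σ : G) * υ ∈ H),
      χ σ * θ ⟨υ⁻¹ * (σ : G) * υ, hσ⟩ = 1

/-- A `W`-orbit `a` in `G/H` is a `χ`-orbit if `χ(σ) = 1` for every `σ ∈ W`
stabilizing a point of `a` (the case `θ = 1` of a `(χ,θ)`-orbit). -/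
def IsChiOrbit {G : Type*} [Group G] {H W : Subgroup G} (χ : W →* ℂˣ)
    (a : Quotient (MulAction.orbitRel W (G ⧸ H))) : Prop :=
  ∀ υ : G, Quotient.mk (MulAction.orbitRel W (G ⧸ H)) (υ : G ⧸ H) = a →
    ∀ σ : W, (σ : G) • (υ : G ⧸ H) = (υ : G ⧸ H) → χ σ = 1

section aux
variable {G : Type*} [Group G] {H W : Subgroup G}

lemma orbitRel_smul (ν : G) (hν : ν ∈ Subgroup.normalizer (W : Set G)) {x y : G ⧸ H}
    (h : (MulAction.orbitRel W (G ⧸ H)).r x y) :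
    (MulAction.orbitRel W (G ⧸ H)).r (ν • x) (ν • y) := by
  obtain ⟨σ, hs⟩ := h
  refine ⟨⟨ν * σ * ν⁻¹, (Subgroup.mem_normalizer_iff.mp hν σ).mp σ.2⟩, ?_⟩
  show (ν * (σ:G) * ν⁻¹) • (ν • y) = ν • x
  have h2 : ν * (σ:G) * ν⁻¹ * ν = ν * (σ:G) := by group
  rw [smul_smul, h2, ← smul_smul]
  exact congrArg (fun z => ν • z) hs

def orbitEquiv (ν : G) (hν : ν ∈ Subgroup.normalizer (W : Set G)) :
    Quotient (MulAction.orbitRel W (G ⧸ H)) ≃ Quotient (MulAction.orbitRel W (G ⧸ H)) where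
  toFun := Quotient.map (fun x => ν⁻¹ • x)
    (fun _ _ h => orbitRel_smul ν⁻¹ (Subgroup.inv_mem _ hν) h)
  invFun := Quotient.map (fun x => ν • x) (fun _ _ h => orbitRel_smul ν hν h)
  left_inv := by
    apply Quotient.ind
    intro x
    simp [Quotient.map_mk, smul_smul]
  right_inv := by
    apply Quotient.ind
    intro x
    simp [Quotient.map_mk, smul_smul]

lemma orbitEquiv_mk (ν : G) (hν : ν ∈ Subgroup.normalizer (W : Set G)) (υ : G) :
    orbitEquiv ν hν (Quotient.mk (MulAction.orbitRel W (G ⧸ H)) (υ : G ⧸ H))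
      = Quotient.mk (MulAction.orbitRel W (G ⧸ H)) ((ν⁻¹ * υ : G) : G ⧸ H) := by
  unfold orbitEquiv
  simp only [Equiv.coe_fn_mk, Quotient.map_mk]
  rfl

lemma conj_mem (ν : G) (hν : ν ∈ Subgroup.normalizer (W : Set G)) (σ : W) : ν * (σ:G) * ν⁻¹ ∈ W :=
  (Subgroup.mem_normalizer_iff.mp hν σ).mp σ.2

lemma conj_mem' (ν : G) (hν : ν ∈ Subgroup.normalizer (W : Set G)) (σ : W) : ν⁻¹ * (σ:G) * ν ∈ W := by
  have h := (Subgroup.mem_normalizer_iff.mp (Subgroup.inv_mem _ hν) (σ : G)).mp σ.2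
  simpa using h

end aux


/-- Suppose `G` is finite.  For `ν` in the normalizer of `W`,
the number of `(νχ,θ)`-orbits equals the number of `(χ,θ)`-orbits; in particular
(taking `θ` trivial) the number of `νχ`-orbits equals the number of `χ`-orbits. -/
theorem lunn_senior_stmt14 {G : Type*} [Group G] [Finite G] (H W : Subgroup G)
    (χ : W →* ℂˣ) (θ : H →* ℂˣ) (ν : G) (hν : ν ∈ Subgroup.normalizer (W : Set G)) :
    Nat.card {a : Quotient (MulAction.orbitRel W (G ⧸ H)) //
        IsChiThetaOrbit (conjChar ν hν χ) θ a}
      = Nat.card {a : Quotient (MulAction.orbitRel W (G ⧸ H)) // IsChiThetaOrbit χ θ a} ∧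
    Nat.card {a : Quotient (MulAction.orbitRel W (G ⧸ H)) //
        IsChiOrbit (conjChar ν hν χ) a}
      = Nat.card {a : Quotient (MulAction.orbitRel W (G ⧸ H)) // IsChiOrbit χ a} := by
  have key : ∀ a (υ : G), Quotient.mk (MulAction.orbitRel W (G ⧸ H)) (υ : G ⧸ H) = a →
      Quotient.mk (MulAction.orbitRel W (G ⧸ H)) ((ν⁻¹ * υ : G) : G ⧸ H) = orbitEquiv ν hν a :=
    fun a υ hυ => by rw [← hυ, orbitEquiv_mk]
  have key' : ∀ a (υ : G),
      Quotient.mk (MulAction.orbitRel W (G ⧸ H)) (υ : G ⧸ H) = orbitEquiv ν hν a →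
      Quotient.mk (MulAction.orbitRel W (G ⧸ H)) ((ν * υ : G) : G ⧸ H) = a := fun a υ hυ => by
    apply (orbitEquiv ν hν).injective
    rw [orbitEquiv_mk, ← hυ]
    congr 2
    group
  constructor
  · refine Nat.card_congr (Equiv.subtypeEquiv (orbitEquiv ν hν) fun a => ⟨?_, ?_⟩)
    · intro h υ hυ σ hσ
      set σ' : W := ⟨ν * (σ:G) * ν⁻¹, conj_mem ν hν σ⟩ with hσ'def
      have heq : (ν*υ)⁻¹ * (σ':G) * (ν*υ) = υ⁻¹ * (σ:G) * υ := by
        show (ν*υ)⁻¹ * (ν * (σ:G) * ν⁻¹) * (ν*υ) = υ⁻¹ * (σ:G) * υ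
        group
      have hσ'' : (ν*υ)⁻¹ * (σ':G) * (ν*υ) ∈ H := by rw [heq]; exact hσ
      have hthis := h (ν*υ) (key' a υ hυ) σ' hσ''
      have e1 : (conjChar ν hν χ) σ' = χ σ := by
        show χ _ = χ σ
        congr 1
        ext
        show ν⁻¹ * (ν * (σ:G) * ν⁻¹) * ν = (σ:G)
        group
      have e2 : (⟨(ν*υ)⁻¹ * (σ':G) * (ν*υ), hσ''⟩ : H) = ⟨υ⁻¹ * (σ:G) * υ, hσ⟩ :=
        Subtype.ext heq
      rw [e1, e2] at hthis
      exact hthis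
    · intro h υ hυ σ hσ
      set τ : W := ⟨ν⁻¹ * (σ:G) * ν, conj_mem' ν hν σ⟩ with hτdef
      have heq : (ν⁻¹*υ)⁻¹ * (τ:G) * (ν⁻¹*υ) = υ⁻¹ * (σ:G) * υ := by
        show (ν⁻¹*υ)⁻¹ * (ν⁻¹ * (σ:G) * ν) * (ν⁻¹*υ) = υ⁻¹ * (σ:G) * υ
        group
      have hτ' : (ν⁻¹*υ)⁻¹ * (τ:G) * (ν⁻¹*υ) ∈ H := by rw [heq]; exact hσ
      have hthis := h (ν⁻¹*υ) (key a υ hυ) τ hτ'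
      have e2 : (⟨(ν⁻¹*υ)⁻¹ * (τ:G) * (ν⁻¹*υ), hτ'⟩ : H) = ⟨υ⁻¹ * (σ:G) * υ, hσ⟩ :=
        Subtype.ext heq
      rw [e2] at hthis
      exact hthis
  · refine Nat.card_congr (Equiv.subtypeEquiv (orbitEquiv ν hν) fun a => ⟨?_, ?_⟩)
    · intro h υ hυ σ hst
      set σ' : W := ⟨ν * (σ:G) * ν⁻¹, conj_mem ν hν σ⟩ with hσ'def
      have hst' : (σ' : G) • ((ν*υ : G) : G ⧸ H) = ((ν*υ : G) : G ⧸ H) := by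
        show (ν * (σ:G) * ν⁻¹) • _ = _
        rw [MulAction.Quotient.smul_coe, QuotientGroup.eq] at hst ⊢
        simp only [smul_eq_mul] at hst ⊢
        have h3 : (ν * (σ:G) * ν⁻¹ * (ν*υ))⁻¹ * (ν*υ) = ((σ:G) * υ)⁻¹ * υ := by group
        rw [h3]
        exact hst
      have hthis := h (ν*υ) (key' a υ hυ) σ' hst'
      have e1 : (conjChar ν hν χ) σ' = χ σ := by
        show χ _ = χ σ
        congr 1
        ext
        show ν⁻¹ * (ν * (σ:G) * ν⁻¹) * ν = (σ:G)
        group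
      rw [e1] at hthis
      exact hthis
    · intro h υ hυ σ hst
      set τ : W := ⟨ν⁻¹ * (σ:G) * ν, conj_mem' ν hν σ⟩ with hτdef
      have hst' : (τ : G) • ((ν⁻¹*υ : G) : G ⧸ H) = ((ν⁻¹*υ : G) : G ⧸ H) := by
        show (ν⁻¹ * (σ:G) * ν) • _ = _
        rw [MulAction.Quotient.smul_coe, QuotientGroup.eq] at hst ⊢
        simp only [smul_eq_mul] at hst ⊢
        have h3 : (ν⁻¹ * (σ:G) * ν * (ν⁻¹*υ))⁻¹ * (ν⁻¹*υ) = ((σ:G) * υ)⁻¹ * υ := by group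
        rw [h3]
        exact hst
      exact h (ν⁻¹*υ) (key a υ hυ) τ hst'
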